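/- Let a_1,…,a_n ∈ ℝ^N be distinct points, s ∈ ℝ, α_1,…,α_n ∈ [0,1] with Σ α_i = 1, and define φ_s(x) = Π_{i=1}^n |x-a_i|^{sα_i} on ℝ^N \ {a_1,…,a_n}. Then Δφ_s = φ_s · ( s(N+s-2) Σ_{i=1}^n α_i/|x-a_i|² − s² Σ_{1≤i<j≤n} α_i α_j |a_i-a_j|² / (|x-a_i|²|x-a_j|²) ) at every x ∉ {a_1,…,a_n}. -/

import Mathlib

open MeasureTheory

open Real Filter
open scoped RealInnerProductSpace

set_option maxHeartbeats 1000000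

section LapAux

variable {N : ℕ}

lemma hasFDerivAt_q (a x : EuclideanSpace ℝ (Fin N)) :
    HasFDerivAt (fun y : EuclideanSpace ℝ (Fin N) => ‖y - a‖ ^ 2)
      ((2 : ℝ) • (innerSL ℝ (x - a))) x := by
  have h1 : HasFDerivAt (fun y : EuclideanSpace ℝ (Fin N) => y - a)
      (ContinuousLinearMap.id ℝ _) x := (hasFDerivAt_id x).sub_const a
  have h2 := h1.inner ℝ h1
  have h3 : (fun y : EuclideanSpace ℝ (Fin N) => ⟪y - a, y - a⟫)
      = fun y => ‖y - a‖ ^ 2 := by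
    funext y; exact real_inner_self_eq_norm_sq _
  rw [h3] at h2
  refine h2.congr_fderiv (Eq.symm ?_)
  ext v
  simp [real_inner_comm, two_mul, mul_sub, Finset.sum_sub_distrib, mul_comm]
  rw [inner_sub_right, real_inner_comm x v, real_inner_comm a v]
  ring

variable {n : ℕ}

lemma phi_eq_exp (a : Fin n → EuclideanSpace ℝ (Fin N)) (c : Fin n → ℝ)
    (y : EuclideanSpace ℝ (Fin N)) (hy : ∀ i, y ≠ a i) :
    ∏ i, ‖y - a i‖ ^ (c i) = Real.exp (∑ i, c i / 2 * Real.log (‖y - a i‖ ^ 2)) := by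
  rw [Real.exp_sum]
  refine Finset.prod_congr rfl fun i _ => ?_
  have hr : (0:ℝ) < ‖y - a i‖ := by
    rw [norm_pos_iff]; exact sub_ne_zero.mpr (hy i)
  rw [Real.log_pow, Real.rpow_def_of_pos hr]
  push_cast
  ring_nf

lemma hasFDerivAt_phi (a : Fin n → EuclideanSpace ℝ (Fin N)) (c : Fin n → ℝ)
    (x : EuclideanSpace ℝ (Fin N)) (hx : ∀ i, x ≠ a i) :
    HasFDerivAt (fun y => ∏ i, ‖y - a i‖ ^ (c i))
      ((∏ i, ‖x - a i‖ ^ (c i)) •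
        ∑ i, (c i / ‖x - a i‖ ^ 2) • (innerSL ℝ (x - a i))) x := by
  have hqpos : ∀ i, (0:ℝ) < ‖x - a i‖ ^ 2 := by
    intro i
    have h0 : x - a i ≠ 0 := sub_ne_zero.mpr (hx i)
    have := norm_pos_iff.mpr h0
    positivity
  have hL : HasFDerivAt (fun y => ∑ i, c i / 2 * Real.log (‖y - a i‖ ^ 2))
      (∑ i, (c i / 2) • ((‖x - a i‖ ^ 2)⁻¹ • ((2 : ℝ) • (innerSL ℝ (x - a i))))) x := by
    refine HasFDerivAt.fun_sum fun i _ => ?_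
    exact ((hasFDerivAt_q (a i) x).log (hqpos i).ne').const_mul (c i / 2)
  have hE := hL.exp
  have hU : IsOpen {y : EuclideanSpace ℝ (Fin N) | ∀ i, y ≠ a i} := by
    have : {y : EuclideanSpace ℝ (Fin N) | ∀ i, y ≠ a i}
        = ⋂ i, {y | y ≠ a i} := by ext y; simp
    rw [this]
    exact isOpen_iInter_of_finite fun i => isOpen_ne
  have hev : (fun y => ∏ i, ‖y - a i‖ ^ (c i))
      =ᶠ[nhds x] (fun y => Real.exp (∑ i, c i / 2 * Real.log (‖y - a i‖ ^ 2))) := by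
    filter_upwards [hU.mem_nhds hx] with y hy
    exact phi_eq_exp a c y hy
  have hE' := hE.congr_of_eventuallyEq hev
  refine hE'.congr_fderiv (Eq.symm ?_)
  rw [← phi_eq_exp a c x hx]
  congr 1
  refine Finset.sum_congr rfl fun i _ => ?_
  rw [smul_smul, smul_smul]
  congr 1
  rw [div_eq_mul_inv]
  ring

lemma fderiv_phi (a : Fin n → EuclideanSpace ℝ (Fin N)) (c : Fin n → ℝ)
    (x : EuclideanSpace ℝ (Fin N)) (hx : ∀ i, x ≠ a i) (v : EuclideanSpace ℝ (Fin N)) :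
    fderiv ℝ (fun y => ∏ i, ‖y - a i‖ ^ (c i)) x v
      = (∏ i, ‖x - a i‖ ^ (c i)) * ∑ i, c i * ⟪x - a i, v⟫ / ‖x - a i‖ ^ 2 := by
  rw [(hasFDerivAt_phi a c x hx).fderiv]
  simp only [ContinuousLinearMap.smul_apply, ContinuousLinearMap.coe_sum', Finset.sum_apply,
    ContinuousLinearMap.coe_smul', Pi.smul_apply, innerSL_apply_apply, smul_eq_mul, Finset.mul_sum]
  refine Finset.sum_congr rfl fun i _ => ?_
  ring

lemma isOpenU (a : Fin n → EuclideanSpace ℝ (Fin N)) :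
    IsOpen {y : EuclideanSpace ℝ (Fin N) | ∀ i, y ≠ a i} := by
  have : {y : EuclideanSpace ℝ (Fin N) | ∀ i, y ≠ a i}
      = ⋂ i, {y | y ≠ a i} := by ext y; simp
  rw [this]
  exact isOpen_iInter_of_finite fun i => isOpen_ne

lemma second_deriv (a : Fin n → EuclideanSpace ℝ (Fin N)) (c : Fin n → ℝ)
    (x : EuclideanSpace ℝ (Fin N)) (hx : ∀ i, x ≠ a i) (v : EuclideanSpace ℝ (Fin N)) :
    fderiv ℝ (fun y => fderiv ℝ (fun z => ∏ i, ‖z - a i‖ ^ (c i)) y v) x v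
      = (∏ i, ‖x - a i‖ ^ (c i)) *
          ((∑ i, c i * ⟪x - a i, v⟫ / ‖x - a i‖ ^ 2) ^ 2
            + ∑ i, c i * (⟪v, v⟫ / ‖x - a i‖ ^ 2
                - 2 * ⟪x - a i, v⟫ ^ 2 / (‖x - a i‖ ^ 2) ^ 2)) := by
  have hqpos : ∀ i, (0:ℝ) < ‖x - a i‖ ^ 2 := by
    intro i
    have h0 : x - a i ≠ 0 := sub_ne_zero.mpr (hx i)
    have := norm_pos_iff.mpr h0
    positivity
  -- replace the inner fderiv by its explicit form near x
  have hev : (fun y => fderiv ℝ (fun z => ∏ i, ‖z - a i‖ ^ (c i)) y v)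
      =ᶠ[nhds x] (fun y => (∏ i, ‖y - a i‖ ^ (c i)) *
        ∑ i, c i * ⟪y - a i, v⟫ / ‖y - a i‖ ^ 2) := by
    filter_upwards [(isOpenU a).mem_nhds hx] with y hy
    exact fderiv_phi a c y hy v
  rw [hev.fderiv_eq]
  -- derivatives of the pieces
  have hinv : ∀ i, HasFDerivAt (fun y => (‖y - a i‖ ^ 2)⁻¹)
      ((-((‖x - a i‖ ^ 2) ^ 2)⁻¹ * 2) • (innerSL ℝ (x - a i))) x := by
    intro i
    have h := HasFDerivAt.comp x (hasFDerivAt_inv (hqpos i).ne') (hasFDerivAt_q (a i) x)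
    refine h.congr_fderiv (Eq.symm ?_)
    ext w
    simp [Finset.sum_mul, sub_mul, mul_comm, mul_left_comm, mul_assoc]
    ring
  have hnum : ∀ i, HasFDerivAt (fun y => c i * ⟪y - a i, v⟫)
      (c i • (innerSL ℝ v)) x := by
    intro i
    have h0 : HasFDerivAt (fun y : EuclideanSpace ℝ (Fin N) => ⟪v, y⟫)
        (innerSL ℝ v) x := (innerSL ℝ v).hasFDerivAt
    have h1 := (h0.sub_const ⟪v, a i⟫).const_mul (c i)
    have h2 : (fun y : EuclideanSpace ℝ (Fin N) => c i * (⟪v, y⟫ - ⟪v, a i⟫))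
        = fun y => c i * ⟪y - a i, v⟫ := by
      funext y
      rw [← inner_sub_right, real_inner_comm]
    rw [h2] at h1
    convert h1 using 1
  have hT := HasFDerivAt.fun_sum (fun i (_ : i ∈ Finset.univ) => (hnum i).fun_mul (hinv i))
  have hP := hasFDerivAt_phi a c x hx
  have hψ := hP.fun_mul hT
  have hfun : (fun y => (∏ i, ‖y - a i‖ ^ (c i)) *
        ∑ i, c i * ⟪y - a i, v⟫ / ‖y - a i‖ ^ 2)
      = (fun y => (∏ i, ‖y - a i‖ ^ (c i)) *
        ∑ i, (c i * ⟪y - a i, v⟫) * (‖y - a i‖ ^ 2)⁻¹) := by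
    rfl
  rw [hfun, hψ.fderiv]
  simp only [ContinuousLinearMap.add_apply, ContinuousLinearMap.smul_apply,
    ContinuousLinearMap.coe_sum', Finset.sum_apply, ContinuousLinearMap.coe_smul',
    Pi.smul_apply, innerSL_apply_apply, smul_eq_mul]
  have e1 : ∑ i, (c i * ⟪x - a i, v⟫ * (-((‖x - a i‖ ^ 2) ^ 2)⁻¹ * 2 * ⟪x - a i, v⟫) +
        (‖x - a i‖ ^ 2)⁻¹ * (c i * ⟪v, v⟫))
      = ∑ i, c i * (⟪v, v⟫ / ‖x - a i‖ ^ 2 - 2 * ⟪x - a i, v⟫ ^ 2 / (‖x - a i‖ ^ 2) ^ 2) :=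
    Finset.sum_congr rfl fun i _ => by ring
  have e2 : ∑ i, c i * ⟪x - a i, v⟫ * (‖x - a i‖ ^ 2)⁻¹
      = ∑ i, c i * ⟪x - a i, v⟫ / ‖x - a i‖ ^ 2 :=
    Finset.sum_congr rfl fun i _ => by ring
  have e3 : ∑ i, c i / ‖x - a i‖ ^ 2 * ⟪x - a i, v⟫
      = ∑ i, c i * ⟪x - a i, v⟫ / ‖x - a i‖ ^ 2 :=
    Finset.sum_congr rfl fun i _ => by ring
  rw [e1, e2, e3]
  ring

lemma sym_sum {n : ℕ} (f : Fin n → Fin n → ℝ) (hsymm : ∀ i j, f i j = f j i)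
    (hdiag : ∀ i, f i i = 0) :
    ∑ i, ∑ j, f i j = 2 * ∑ i, ∑ j, (if i < j then f i j else 0) := by
  have key : ∀ i j, f i j = (if i < j then f i j else 0) + (if j < i then f i j else 0) := by
    intro i j
    rcases lt_trichotomy i j with h|h|h
    · have h' : ¬ j < i := not_lt.mpr h.le
      simp [h, h']
    · subst h; simp [hdiag]
    · have h' : ¬ i < j := not_lt.mpr h.le
      simp [h, h']
  calc ∑ i, ∑ j, f i j
      = ∑ i, ∑ j, ((if i < j then f i j else 0) + (if j < i then f i j else 0)) :=
        Finset.sum_congr rfl fun i _ => Finset.sum_congr rfl fun j _ => key i j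
    _ = (∑ i, ∑ j, if i < j then f i j else 0) + ∑ i, ∑ j, (if j < i then f i j else 0) := by
        rw [← Finset.sum_add_distrib]
        exact Finset.sum_congr rfl fun i _ => Finset.sum_add_distrib
    _ = 2 * ∑ i, ∑ j, (if i < j then f i j else 0) := by
        have h2 : ∑ i, ∑ j, (if j < i then f i j else 0)
            = ∑ i, ∑ j, (if i < j then f i j else 0) := by
          rw [Finset.sum_comm]
          exact Finset.sum_congr rfl fun i _ => Finset.sum_congr rfl fun j _ => by
            rw [hsymm]
        rw [h2]; ring

lemma coord_inner (u w : EuclideanSpace ℝ (Fin N)) :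
    ∑ k, u k * w k = ⟪u, w⟫ := by
  simp [PiLp.inner_apply, RCLike.inner_apply, conj_trivial, mul_comm]

lemma inner_single (u : EuclideanSpace ℝ (Fin N)) (k : Fin N) :
    ⟪u, EuclideanSpace.single k 1⟫ = u k := by
  simp [EuclideanSpace.inner_single_right]

lemma single_inner_self (k : Fin N) :
    ⟪(EuclideanSpace.single k 1 : EuclideanSpace ℝ (Fin N)),
      EuclideanSpace.single k 1⟫ = 1 := by
  simp [EuclideanSpace.inner_single_right]

lemma frac_aux (u v A d : ℝ) (hu : u ≠ 0) (hv : v ≠ 0) :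
    A / (u * v) * ((u + v - d) / 2)
      = A / 2 * (1 / v) + (A / 2 * (1 / u) - A / 2 * (d / (u * v))) := by
  field_simp
  ring

lemma frac_aux2 (q A B : ℝ) (hq : q ≠ 0) :
    B * (A / q) - 2 * A / q ^ 2 * q = A * (B - 2) / q := by
  field_simp


end LapAux


noncomputable def lap {N : ℕ} (f : EuclideanSpace ℝ (Fin N) → ℝ)
    (x : EuclideanSpace ℝ (Fin N)) : ℝ :=
  ∑ i, fderiv ℝ (fun y => fderiv ℝ f y (EuclideanSpace.single i 1)) x
    (EuclideanSpace.single i 1)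

/-- Laplacian of the multipolar ground state `φ_s(x) = ∏ |x - aᵢ|^{s αᵢ}`. -/
theorem lap_multipolar (N n : ℕ) (a : Fin n → EuclideanSpace ℝ (Fin N))
    (ha : Function.Injective a) (s : ℝ)
    (α : Fin n → ℝ) (hα0 : ∀ i, 0 ≤ α i) (hα1 : ∀ i, α i ≤ 1)
    (hαsum : ∑ i, α i = 1)
    (φs : EuclideanSpace ℝ (Fin N) → ℝ)
    (hφs : φs = fun x => ∏ i, ‖x - a i‖ ^ (s * α i)) :
    ∀ x : EuclideanSpace ℝ (Fin N), x ∉ Set.range a →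
      lap φs x = φs x *
        (s * ((N : ℝ) + s - 2) * ∑ i, α i / ‖x - a i‖ ^ 2
          - s ^ 2 * ∑ i, ∑ j, if i < j then
              α i * α j * ‖a i - a j‖ ^ 2 / (‖x - a i‖ ^ 2 * ‖x - a j‖ ^ 2)
            else 0) := by
  subst hφs
  intro x hxr
  have hx : ∀ i, x ≠ a i := fun i h => hxr ⟨i, h.symm⟩
  have hqpos : ∀ i, (0:ℝ) < ‖x - a i‖ ^ 2 := by
    intro i
    have h0 : x - a i ≠ 0 := sub_ne_zero.mpr (hx i)
    have := norm_pos_iff.mpr h0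
    positivity
  have hnorm : ∀ i, ‖x - a i‖ ≠ 0 :=
    fun i => norm_ne_zero_iff.mpr (sub_ne_zero.mpr (hx i))
  have hterm : ∀ k : Fin N,
      fderiv ℝ (fun y => fderiv ℝ (fun z => ∏ i, ‖z - a i‖ ^ (s * α i)) y
          (EuclideanSpace.single k 1)) x (EuclideanSpace.single k 1)
        = (∏ i, ‖x - a i‖ ^ (s * α i)) *
            ((∑ i, s * α i * (x - a i) k / ‖x - a i‖ ^ 2) ^ 2
              + ∑ i, s * α i * (1 / ‖x - a i‖ ^ 2
                  - 2 * ((x - a i) k) ^ 2 / (‖x - a i‖ ^ 2) ^ 2)) := by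
    intro k
    rw [second_deriv a (fun i => s * α i) x hx (EuclideanSpace.single k 1)]
    rw [single_inner_self]
    have e1 : (∑ i, s * α i * ⟪x - a i, EuclideanSpace.single k 1⟫ / ‖x - a i‖ ^ 2)
        = ∑ i, s * α i * (x - a i) k / ‖x - a i‖ ^ 2 :=
      Finset.sum_congr rfl fun i _ => by rw [inner_single]
    have e2 : (∑ i, s * α i * (1 / ‖x - a i‖ ^ 2
          - 2 * ⟪x - a i, EuclideanSpace.single k 1⟫ ^ 2 / (‖x - a i‖ ^ 2) ^ 2))
        = ∑ i, s * α i * (1 / ‖x - a i‖ ^ 2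
            - 2 * ((x - a i) k) ^ 2 / (‖x - a i‖ ^ 2) ^ 2) :=
      Finset.sum_congr rfl fun i _ => by rw [inner_single]
    rw [e1, e2]
  have hlap : lap (fun z => ∏ i, ‖z - a i‖ ^ (s * α i)) x
      = (∏ i, ‖x - a i‖ ^ (s * α i)) *
          ∑ k, ((∑ i, s * α i * (x - a i) k / ‖x - a i‖ ^ 2) ^ 2
            + ∑ i, s * α i * (1 / ‖x - a i‖ ^ 2
                - 2 * ((x - a i) k) ^ 2 / (‖x - a i‖ ^ 2) ^ 2)) := by
    rw [lap, Finset.mul_sum]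
    exact Finset.sum_congr rfl fun k _ => hterm k
  rw [hlap]
  congr 1
  rw [Finset.sum_add_distrib]
  -- the square term
  have h1 : ∑ k, (∑ i, s * α i * (x - a i) k / ‖x - a i‖ ^ 2) ^ 2
      = ∑ i, ∑ j, ((s ^ 2 / 2) * (α i * (α j / ‖x - a j‖ ^ 2))
          + ((s ^ 2 / 2) * ((α i / ‖x - a i‖ ^ 2) * α j)
          - (s ^ 2 / 2) * (α i * α j * ‖a i - a j‖ ^ 2
              / (‖x - a i‖ ^ 2 * ‖x - a j‖ ^ 2)))) := by
    have hAij : ∀ i j, ⟪x - a i, x - a j⟫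
        = (‖x - a i‖ ^ 2 + ‖x - a j‖ ^ 2 - ‖a i - a j‖ ^ 2) / 2 := by
      intro i j
      have hab : a i - a j = (x - a j) - (x - a i) := by abel
      have h2 : ‖(x - a j) - (x - a i)‖ ^ 2
          = ‖x - a j‖ ^ 2 - 2 * ⟪x - a j, x - a i⟫ + ‖x - a i‖ ^ 2 :=
        norm_sub_sq_real _ _
      rw [hab, h2, real_inner_comm (x - a j) (x - a i)]
      ring
    calc ∑ k, (∑ i, s * α i * (x - a i) k / ‖x - a i‖ ^ 2) ^ 2
        = ∑ k, ∑ i, ∑ j, (s * α i * (x - a i) k / ‖x - a i‖ ^ 2)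
            * (s * α j * (x - a j) k / ‖x - a j‖ ^ 2) :=
          Finset.sum_congr rfl fun k _ => by
            rw [pow_two, Finset.sum_mul_sum]
      _ = ∑ i, ∑ k, ∑ j, (s * α i * (x - a i) k / ‖x - a i‖ ^ 2)
            * (s * α j * (x - a j) k / ‖x - a j‖ ^ 2) := Finset.sum_comm
      _ = ∑ i, ∑ j, ∑ k, (s * α i * (x - a i) k / ‖x - a i‖ ^ 2)
            * (s * α j * (x - a j) k / ‖x - a j‖ ^ 2) :=
          Finset.sum_congr rfl fun i _ => Finset.sum_comm
      _ = ∑ i, ∑ j, (s * α i * (s * α j) / (‖x - a i‖ ^ 2 * ‖x - a j‖ ^ 2))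
            * ⟪x - a i, x - a j⟫ := by
          refine Finset.sum_congr rfl fun i _ => Finset.sum_congr rfl fun j _ => ?_
          rw [← coord_inner, Finset.mul_sum]
          exact Finset.sum_congr rfl fun k _ => by ring
      _ = _ := by
          refine Finset.sum_congr rfl fun i _ => Finset.sum_congr rfl fun j _ => ?_
          rw [hAij i j]
          calc s * α i * (s * α j) / (‖x - a i‖ ^ 2 * ‖x - a j‖ ^ 2)
                * ((‖x - a i‖ ^ 2 + ‖x - a j‖ ^ 2 - ‖a i - a j‖ ^ 2) / 2)
              = s * α i * (s * α j) / 2 * (1 / ‖x - a j‖ ^ 2)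
                + (s * α i * (s * α j) / 2 * (1 / ‖x - a i‖ ^ 2)
                  - s * α i * (s * α j) / 2 * (‖a i - a j‖ ^ 2
                      / (‖x - a i‖ ^ 2 * ‖x - a j‖ ^ 2))) :=
              frac_aux _ _ _ _ (hqpos i).ne' (hqpos j).ne'
            _ = _ := by ring
  -- the diagonal term
  have h2 : ∑ k, ∑ i, s * α i * (1 / ‖x - a i‖ ^ 2
        - 2 * ((x - a i) k) ^ 2 / (‖x - a i‖ ^ 2) ^ 2)
      = ∑ i, s * α i * ((N : ℝ) - 2) / ‖x - a i‖ ^ 2 := by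
    rw [Finset.sum_comm]
    refine Finset.sum_congr rfl fun i _ => ?_
    have hsq : ∑ k, (x - a i) k * (x - a i) k = ‖x - a i‖ ^ 2 := by
      rw [coord_inner, real_inner_self_eq_norm_sq]
    have hstep : ∀ k : Fin N, s * α i * (1 / ‖x - a i‖ ^ 2
          - 2 * ((x - a i) k) ^ 2 / (‖x - a i‖ ^ 2) ^ 2)
        = s * α i / ‖x - a i‖ ^ 2
          - (2 * (s * α i) / (‖x - a i‖ ^ 2) ^ 2) * ((x - a i) k * (x - a i) k) := by
      intro k; ring
    rw [Finset.sum_congr rfl fun k _ => hstep k, Finset.sum_sub_distrib,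
      Finset.sum_const, ← Finset.mul_sum, hsq, Finset.card_univ, Fintype.card_fin,
      nsmul_eq_mul]
    calc (N : ℝ) * (s * α i / ‖x - a i‖ ^ 2)
          - 2 * (s * α i) / (‖x - a i‖ ^ 2) ^ 2 * ‖x - a i‖ ^ 2
        = (s * α i) * ((N : ℝ) - 2) / ‖x - a i‖ ^ 2 :=
          frac_aux2 _ _ _ (hqpos i).ne'
      _ = _ := by ring
  rw [h1, h2]
  simp only [Finset.sum_add_distrib, Finset.sum_sub_distrib]
  -- evaluate the three double sums
  have hQ1 : ∑ i, ∑ j, (s ^ 2 / 2) * (α i * (α j / ‖x - a j‖ ^ 2))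
      = (s ^ 2 / 2) * ∑ j, α j / ‖x - a j‖ ^ 2 := by
    calc ∑ i, ∑ j, (s ^ 2 / 2) * (α i * (α j / ‖x - a j‖ ^ 2))
        = ∑ i, (s ^ 2 / 2) * ∑ j, α i * (α j / ‖x - a j‖ ^ 2) :=
          Finset.sum_congr rfl fun i _ => (Finset.mul_sum _ _ _).symm
      _ = (s ^ 2 / 2) * ∑ i, ∑ j, α i * (α j / ‖x - a j‖ ^ 2) :=
          (Finset.mul_sum _ _ _).symm
      _ = (s ^ 2 / 2) * ((∑ i, α i) * ∑ j, α j / ‖x - a j‖ ^ 2) := by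
          rw [← Finset.sum_mul_sum]
      _ = _ := by rw [hαsum, one_mul]
  have hQ2 : ∑ i, ∑ j, (s ^ 2 / 2) * ((α i / ‖x - a i‖ ^ 2) * α j)
      = (s ^ 2 / 2) * ∑ i, α i / ‖x - a i‖ ^ 2 := by
    calc ∑ i, ∑ j, (s ^ 2 / 2) * ((α i / ‖x - a i‖ ^ 2) * α j)
        = ∑ i, (s ^ 2 / 2) * ∑ j, (α i / ‖x - a i‖ ^ 2) * α j :=
          Finset.sum_congr rfl fun i _ => (Finset.mul_sum _ _ _).symm
      _ = (s ^ 2 / 2) * ∑ i, ∑ j, (α i / ‖x - a i‖ ^ 2) * α j :=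
          (Finset.mul_sum _ _ _).symm
      _ = (s ^ 2 / 2) * ((∑ i, α i / ‖x - a i‖ ^ 2) * ∑ j, α j) := by
          rw [← Finset.sum_mul_sum]
      _ = _ := by rw [hαsum, mul_one]
  have hQ3 : ∑ i, ∑ j, (s ^ 2 / 2) * (α i * α j * ‖a i - a j‖ ^ 2
        / (‖x - a i‖ ^ 2 * ‖x - a j‖ ^ 2))
      = (s ^ 2 / 2) * (2 * ∑ i, ∑ j, if i < j then
          α i * α j * ‖a i - a j‖ ^ 2 / (‖x - a i‖ ^ 2 * ‖x - a j‖ ^ 2) else 0) := by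
    calc ∑ i, ∑ j, (s ^ 2 / 2) * (α i * α j * ‖a i - a j‖ ^ 2
          / (‖x - a i‖ ^ 2 * ‖x - a j‖ ^ 2))
        = ∑ i, (s ^ 2 / 2) * ∑ j, (α i * α j * ‖a i - a j‖ ^ 2
            / (‖x - a i‖ ^ 2 * ‖x - a j‖ ^ 2)) :=
          Finset.sum_congr rfl fun i _ => (Finset.mul_sum _ _ _).symm
      _ = (s ^ 2 / 2) * ∑ i, ∑ j, (α i * α j * ‖a i - a j‖ ^ 2
            / (‖x - a i‖ ^ 2 * ‖x - a j‖ ^ 2)) := (Finset.mul_sum _ _ _).symm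
      _ = _ := by
          congr 1
          refine sym_sum _ (fun i j => ?_) (fun i => by simp)
          rw [norm_sub_rev]
          ring
  rw [hQ1, hQ2, hQ3]
  have h3 : ∑ i, s * α i * ((N : ℝ) - 2) / ‖x - a i‖ ^ 2
      = s * ((N : ℝ) - 2) * ∑ i, α i / ‖x - a i‖ ^ 2 := by
    rw [Finset.mul_sum]
    exact Finset.sum_congr rfl fun i _ => by ring
  rw [h3]
  ring
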